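/- Let x be a random vector in ℝ^d whose coordinates are i.i.d. standard Gaussian N(0,1), let w_* ∈ ℝ^d, and let W ∈ ℝ^{d×K} have columns w^{(1)}, …, w^{(K)}. Then for every k ∈ {1, …, K}, the population gradient E[ (Σ_{j=1}^K ⟨x, w^{(j)}⟩² − ⟨x, w_*⟩²) ⟨x, w^{(k)}⟩ x ] equals (3‖w^{(k)}‖² − ‖w_*‖²) w^{(k)} − 2⟨w_*, w^{(k)}⟩ w_* + Σ_{j≠k} ( 2⟨w^{(j)}, w^{(k)}⟩ w^{(j)} + ‖w^{(j)}‖² w^{(k)} ). -/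

import Mathlib

open MeasureTheory ProbabilityTheory Matrix

open Real
open scoped NNReal ENNReal

section Aux

/-! ### One-dimensional Gaussian integrals -/

lemma integrable_pow_gauss (n : ℕ) :
    Integrable (fun x : ℝ => x ^ n * rexp (-(1/2) * x ^ 2)) := by
  have hn : (-1 : ℝ) < (n : ℝ) := by
    have : (0:ℝ) ≤ n := Nat.cast_nonneg n
    linarith
  have h := integrable_rpow_mul_exp_neg_mul_sq (b := 1/2) (by norm_num) hn
  simpa [Real.rpow_natCast] using h

lemma J0 : ∫ x : ℝ, rexp (-(1/2) * x ^ 2) = Real.sqrt (2 * π) := by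
  rw [integral_gaussian]
  rw [show π / (1/2) = 2 * π by ring]

lemma J_odd (n : ℕ) (hn : Odd n) : ∫ x : ℝ, x ^ n * rexp (-(1/2) * x ^ 2) = 0 := by
  have h := integral_neg_eq_self (fun y : ℝ => y ^ n * rexp (-(1/2) * y ^ 2)) (volume : Measure ℝ)
  rw [show (fun x : ℝ => ((fun y : ℝ => y ^ n * rexp (-(1/2) * y ^ 2)) (-x)))
      = fun x : ℝ => -(x ^ n * rexp (-(1/2) * x ^ 2)) by
    funext x; simp only; rw [hn.neg_pow]; ring_nf] at h
  rw [integral_neg] at h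
  linarith

lemma J_rec (n : ℕ) :
    ∫ x : ℝ, x ^ (n + 2) * rexp (-(1/2) * x ^ 2)
      = (n + 1 : ℝ) * ∫ x : ℝ, x ^ n * rexp (-(1/2) * x ^ 2) := by
  have hderiv : ∀ x : ℝ, HasDerivAt (fun x : ℝ => x ^ (n+1) * rexp (-(1/2) * x ^ 2))
      ((n+1 : ℝ) * (x ^ n * rexp (-(1/2) * x ^ 2)) - x ^ (n+2) * rexp (-(1/2) * x ^ 2)) x := by
    intro x
    have h1 : HasDerivAt (fun x : ℝ => x ^ (n+1)) ((n+1 : ℝ) * x ^ n) x := by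
      simpa using hasDerivAt_pow (n+1) x
    have h2 : HasDerivAt (fun x : ℝ => rexp (-(1/2) * x ^ 2))
        (rexp (-(1/2) * x ^ 2) * (-(1/2) * (2 * x))) x := by
      have := ((hasDerivAt_pow 2 x).const_mul (-(1/2) : ℝ)).exp
      simpa using this
    have := h1.fun_mul h2
    exact this.congr_deriv (by ring)
  have hf' : Integrable (fun x : ℝ =>
      (n+1 : ℝ) * (x ^ n * rexp (-(1/2) * x ^ 2)) - x ^ (n+2) * rexp (-(1/2) * x ^ 2)) := by
    apply Integrable.sub
    · exact (integrable_pow_gauss n).const_mul (n+1 : ℝ)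
    · exact integrable_pow_gauss (n+2)
  have hzero := integral_eq_zero_of_hasDerivAt_of_integrable hderiv hf' (integrable_pow_gauss (n+1))
  rw [integral_sub ((integrable_pow_gauss n).const_mul _) (integrable_pow_gauss (n+2)),
    integral_const_mul] at hzero
  linarith

lemma pdf01 (x : ℝ) : gaussianPDFReal 0 1 x = (Real.sqrt (2 * π))⁻¹ * rexp (-(1/2) * x ^ 2) := by
  simp only [gaussianPDFReal, NNReal.coe_one, mul_one, sub_zero]
  congr 1
  ring_nf

lemma gauss_density (g : ℝ → ℝ) :
    ∫ x, g x ∂(gaussianReal 0 1) = ∫ x, gaussianPDFReal 0 1 x * g x := by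
  rw [gaussianReal_of_var_ne_zero 0 one_ne_zero]
  have h : (gaussianPDF 0 1) = fun x => ((Real.toNNReal (gaussianPDFReal 0 1 x) : ℝ≥0) : ℝ≥0∞) :=
    rfl
  rw [h, integral_withDensity_eq_integral_smul
    ((measurable_gaussianPDFReal 0 1).real_toNNReal)]
  congr 1
  funext x
  simp [NNReal.smul_def, Real.coe_toNNReal _ (gaussianPDFReal_nonneg 0 1 x)]

lemma gauss_integrable_iff (g : ℝ → ℝ) :
    Integrable g (gaussianReal 0 1) ↔
      Integrable (fun x => gaussianPDFReal 0 1 x * g x) volume := by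
  rw [gaussianReal_of_var_ne_zero 0 one_ne_zero]
  have h : (gaussianPDF 0 1) = fun x => ((Real.toNNReal (gaussianPDFReal 0 1 x) : ℝ≥0) : ℝ≥0∞) :=
    rfl
  rw [h, integrable_withDensity_iff_integrable_smul
    ((measurable_gaussianPDFReal 0 1).real_toNNReal)]
  constructor <;> intro hh <;>
  · apply hh.congr
    filter_upwards with x
    simp [NNReal.smul_def, Real.coe_toNNReal _ (gaussianPDFReal_nonneg 0 1 x)]

noncomputable def mom (n : ℕ) : ℝ := ∫ y, y ^ n ∂(gaussianReal 0 1)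

lemma sqrt2pi_pos : 0 < Real.sqrt (2 * π) := Real.sqrt_pos.mpr (by positivity)

lemma mom_eq (n : ℕ) :
    mom n = (Real.sqrt (2 * π))⁻¹ * ∫ x : ℝ, x ^ n * rexp (-(1/2) * x ^ 2) := by
  rw [mom, gauss_density, ← integral_const_mul]
  congr 1; funext x; rw [pdf01]; ring

lemma momInt (n : ℕ) : Integrable (fun y : ℝ => y ^ n) (gaussianReal 0 1) := by
  rw [gauss_integrable_iff]
  apply ((integrable_pow_gauss n).const_mul ((Real.sqrt (2 * π))⁻¹)).congr
  filter_upwards with x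
  rw [pdf01]; ring

@[simp] lemma mom_zero : mom 0 = 1 := by
  rw [mom]; simp
@[simp] lemma mom_one : mom 1 = 0 := by
  rw [mom_eq, J_odd 1 (by norm_num), mul_zero]
lemma Jzero' : ∫ x : ℝ, x ^ 0 * rexp (-(1/2) * x ^ 2) = Real.sqrt (2*π) := by
  simp only [pow_zero, one_mul]; exact J0

lemma Jtwo : ∫ x : ℝ, x ^ 2 * rexp (-(1/2) * x ^ 2) = Real.sqrt (2*π) := by
  have h := J_rec 0
  rw [Jzero'] at h
  simpa using h

lemma Jfour : ∫ x : ℝ, x ^ 4 * rexp (-(1/2) * x ^ 2) = 3 * Real.sqrt (2*π) := by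
  have h := J_rec 2
  rw [Jtwo] at h
  norm_num at h
  simpa using h

@[simp] lemma mom_two : mom 2 = 1 := by
  rw [mom_eq, Jtwo, inv_mul_cancel₀ sqrt2pi_pos.ne']
@[simp] lemma mom_three : mom 3 = 0 := by
  rw [mom_eq, J_odd 3 ⟨1, by norm_num⟩, mul_zero]
@[simp] lemma mom_four : mom 4 = 3 := by
  rw [mom_eq, Jfour]
  field_simp

/-! ### Product structure on the pi measure -/

def GR : Type := ℝ
instance : MeasurableSpace GR := inferInstanceAs (MeasurableSpace ℝ)
noncomputable instance : MeasureSpace GR := ⟨gaussianReal 0 1⟩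
instance : SigmaFinite (volume : Measure GR) := inferInstanceAs (SigmaFinite (gaussianReal 0 1))

lemma pi_integral (d : ℕ) (f : Fin d → ℝ → ℝ) :
    ∫ x : Fin d → ℝ, ∏ l, f l (x l) ∂(Measure.pi fun _ => gaussianReal 0 1)
      = ∏ l, ∫ y, f l y ∂(gaussianReal 0 1) := by
  exact MeasureTheory.integral_fintype_prod_eq_prod (ι := Fin d) (E := fun _ => ℝ) f

lemma pi_integrable (d : ℕ) (f : Fin d → ℝ → ℝ) (hf : ∀ l, Integrable (f l) (gaussianReal 0 1)) :
    Integrable (fun x : Fin d → ℝ => ∏ l, f l (x l)) (Measure.pi fun _ => gaussianReal 0 1) := by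
  exact MeasureTheory.Integrable.fintype_prod (ι := Fin d) (E := ℝ) (f := f) hf

/-! ### Fourth-order monomials -/

def cnt {d : ℕ} (p q r s l : Fin d) : ℕ :=
  (if p = l then 1 else 0) + (if q = l then 1 else 0)
    + (if r = l then 1 else 0) + (if s = l then 1 else 0)

lemma mono4_eq (d : ℕ) (p q r s : Fin d) :
    (fun x : Fin d → ℝ => x p * x q * x r * x s)
      = fun x => ∏ l, (x l) ^ (cnt p q r s l) := by
  funext x
  simp only [cnt, pow_add, Finset.prod_mul_distrib, pow_ite, pow_one, pow_zero,
    Finset.prod_ite_eq, Finset.mem_univ, if_true]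

set_option linter.unnecessarySeqFocus false in
lemma prod_mom_eq (d : ℕ) (p q r s : Fin d) :
    ∏ l, mom (cnt p q r s l) =
      (if p = q then (1:ℝ) else 0) * (if r = s then 1 else 0)
    + (if p = r then 1 else 0) * (if q = s then 1 else 0)
    + (if p = s then 1 else 0) * (if q = r then 1 else 0) := by
  rw [← Finset.prod_subset (Finset.subset_univ ({p,q,r,s} : Finset (Fin d)))
      (fun l _ hl => by
        simp only [Finset.mem_insert, Finset.mem_singleton, not_or] at hl
        obtain ⟨h1, h2, h3, h4⟩ := hl
        simp [cnt, Ne.symm h1, Ne.symm h2, Ne.symm h3, Ne.symm h4])]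
  rcases eq_or_ne p q with hpq|hpq <;> rcases eq_or_ne p r with hpr|hpr <;>
  rcases eq_or_ne p s with hps|hps <;> rcases eq_or_ne q r with hqr|hqr <;>
  rcases eq_or_ne q s with hqs|hqs <;> rcases eq_or_ne r s with hrs|hrs <;>
    subst_vars <;>
    simp_all [cnt, eq_comm, Finset.prod_insert, Finset.mem_insert, Finset.mem_singleton] <;>
    norm_num

lemma integral_mono4 (d : ℕ) (p q r s : Fin d) :
    ∫ x : Fin d → ℝ, x p * x q * x r * x s ∂(Measure.pi fun _ => gaussianReal 0 1)
      = (if p = q then (1:ℝ) else 0) * (if r = s then 1 else 0)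
      + (if p = r then 1 else 0) * (if q = s then 1 else 0)
      + (if p = s then 1 else 0) * (if q = r then 1 else 0) := by
  rw [mono4_eq, pi_integral d (fun l y => y ^ cnt p q r s l)]
  exact prod_mom_eq d p q r s

lemma integrable_mono4 (d : ℕ) (p q r s : Fin d) :
    Integrable (fun x : Fin d → ℝ => x p * x q * x r * x s)
      (Measure.pi fun _ => gaussianReal 0 1) := by
  rw [mono4_eq]
  exact pi_integrable d _ (fun l => momInt (cnt p q r s l))

/-! ### The cubic-in-dot-products integrand -/

lemma expand (d : ℕ) (a b : Fin d → ℝ) (i : Fin d) :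
    (fun x : Fin d → ℝ => ((x ⬝ᵥ a) ^ 2) * (x ⬝ᵥ b) * x i)
      = fun x => ∑ p, ∑ q, ∑ r, (a r * a q * b p) * (x r * x q * x p * x i) := by
  funext x
  simp only [dotProduct, sq, Finset.sum_mul, Finset.mul_sum]
  refine Finset.sum_congr rfl fun p _ => Finset.sum_congr rfl fun q _ =>
    Finset.sum_congr rfl fun r _ => by ring

lemma integrable_cube (d : ℕ) (a b : Fin d → ℝ) (i : Fin d) :
    Integrable (fun x : Fin d → ℝ => ((x ⬝ᵥ a) ^ 2) * (x ⬝ᵥ b) * x i)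
      (Measure.pi fun _ => gaussianReal 0 1) := by
  rw [expand]
  exact integrable_finset_sum _ fun p _ => integrable_finset_sum _ fun q _ =>
    integrable_finset_sum _ fun r _ => (integrable_mono4 d r q p i).const_mul _

lemma wick (d : ℕ) (a b : Fin d → ℝ) (i : Fin d) :
    ∫ x : Fin d → ℝ, ((x ⬝ᵥ a) ^ 2) * (x ⬝ᵥ b) * x i ∂(Measure.pi fun _ => gaussianReal 0 1)
      = 2 * (a ⬝ᵥ b) * a i + (a ⬝ᵥ a) * b i := by
  rw [expand]
  rw [integral_finset_sum _ (fun p _ => integrable_finset_sum _ fun q _ =>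
    integrable_finset_sum _ fun r _ => (integrable_mono4 d r q p i).const_mul _)]
  have h1 : ∀ p : Fin d,
      ∫ x : Fin d → ℝ, ∑ q, ∑ r, (a r * a q * b p) * (x r * x q * x p * x i)
        ∂(Measure.pi fun _ => gaussianReal 0 1)
      = ∑ q, ∑ r, (a r * a q * b p) *
          ∫ x : Fin d → ℝ, x r * x q * x p * x i ∂(Measure.pi fun _ => gaussianReal 0 1) := by
    intro p
    rw [integral_finset_sum _ (fun q _ => integrable_finset_sum _ fun r _ =>
      (integrable_mono4 d r q p i).const_mul _)]
    refine Finset.sum_congr rfl fun q _ => ?_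
    rw [integral_finset_sum _ (fun r _ => (integrable_mono4 d r q p i).const_mul _)]
    exact Finset.sum_congr rfl fun r _ => integral_const_mul _ _
  simp only [h1, integral_mono4]
  simp only [mul_add, Finset.sum_add_distrib, mul_ite, mul_one, mul_zero,
    Finset.sum_ite_eq, Finset.sum_ite_eq', Finset.mem_univ, if_true, ite_mul, zero_mul,
    Finset.sum_ite_irrel, Finset.sum_const_zero]
  have hr : 2 * a ⬝ᵥ b * a i + a ⬝ᵥ a * b i
      = ∑ l, (2 * (a l * b l) * a i + a l * a l * b i) := by
    simp only [dotProduct]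
    rw [Finset.sum_add_distrib, ← Finset.sum_mul, ← Finset.sum_mul, ← Finset.mul_sum]
  rw [hr, ← Finset.sum_add_distrib, ← Finset.sum_add_distrib]
  exact Finset.sum_congr rfl fun l _ => by ring

end Aux

/-- The population gradient of the over-parametrized objective with respect to the
`k`-th student neuron: for `x ~ N(0, I_d)`, teacher neuron `w_*` and student neurons
`w^{(1)}, …, w^{(K)}`, for every `k` and every coordinate `i`,
`E[(Σ_j ⟨x, w^{(j)}⟩² − ⟨x, w_*⟩²) ⟨x, w^{(k)}⟩ x]
  = (3‖w^{(k)}‖² − ‖w_*‖²) w^{(k)} − 2⟨w_*, w^{(k)}⟩ w_*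
    + Σ_{j≠k} (2⟨w^{(j)}, w^{(k)}⟩ w^{(j)} + ‖w^{(j)}‖² w^{(k)})`. -/
theorem population_gradient_formula (d K : ℕ) (w : Fin K → Fin d → ℝ) (ws : Fin d → ℝ)
    (k : Fin K) (i : Fin d) :
    ∫ x : Fin d → ℝ,
        ((∑ j, (x ⬝ᵥ w j) ^ 2) - (x ⬝ᵥ ws) ^ 2) * (x ⬝ᵥ w k) * x i
        ∂(Measure.pi fun _ => gaussianReal 0 1)
      = (3 * (w k ⬝ᵥ w k) - ws ⬝ᵥ ws) * w k i - 2 * (ws ⬝ᵥ w k) * ws i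
        + ∑ j ∈ Finset.univ \ {k}, (2 * (w j ⬝ᵥ w k) * w j i + (w j ⬝ᵥ w j) * w k i) := by
  have hsplit : (fun x : Fin d → ℝ => ((∑ j, (x ⬝ᵥ w j) ^ 2) - (x ⬝ᵥ ws) ^ 2) * (x ⬝ᵥ w k) * x i)
      = fun x => (∑ j, ((x ⬝ᵥ w j) ^ 2) * (x ⬝ᵥ w k) * x i)
          - ((x ⬝ᵥ ws) ^ 2) * (x ⬝ᵥ w k) * x i := by
    funext x
    rw [sub_mul, sub_mul, Finset.sum_mul, Finset.sum_mul]
  rw [hsplit,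
    integral_sub (integrable_finset_sum _ fun j _ => integrable_cube d (w j) (w k) i)
      (integrable_cube d ws (w k) i),
    integral_finset_sum _ fun j _ => integrable_cube d (w j) (w k) i]
  simp only [wick]
  rw [show (Finset.univ \ {k} : Finset (Fin K)) = Finset.univ.erase k from
      Finset.sdiff_singleton_eq_erase k Finset.univ,
    ← Finset.add_sum_erase _ _ (Finset.mem_univ k)]
  ring
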